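/- Let S = (x_1, …, x_n) be a finite population of n real numbers all lying in [0,1], and let Y = (y_1, …, y_r) be a sample of size r (1 ≤ r ≤ n) drawn from S uniformly at random without replacement. Then there is an absolute constant C > 0 such that for every δ ∈ (0,1), with probability at least 1 − δ, the deviation of the sample mean from the population mean satisfies |(1/r) Σ_{i=1}^r y_i − (1/n) Σ_{i=1}^n x_i| ≤ C · sqrt((1/r − 1/n) · log(2/δ)). -/

import Mathlib

open Real Finset
open scoped ENNReal

private lemma exp_mul_le_of_mem_Icc {y : ℝ} (hy0 : 0 ≤ y) (hy1 : y ≤ 1) (c : ℝ) :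
    Real.exp (c * y) ≤ 1 - y + y * Real.exp c := by
  have := convexOn_exp.2 (Set.mem_univ (0 : ℝ)) (Set.mem_univ c)
    (by linarith : (0:ℝ) ≤ 1 - y) hy0 (by ring)
  simpa [smul_eq_mul, mul_comm] using this

private lemma hoeffding_scalar {m : ℝ} (hm0 : 0 ≤ m) (hm1 : m ≤ 1) (c : ℝ) :
    1 - m + m * Real.exp c ≤ Real.exp (c * m + c ^ 2 / 8) := by
  have hu : ∀ t : ℝ, 0 < 1 - m + m * Real.exp t := by
    intro t
    rcases lt_or_eq_of_le hm1 with h | h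
    · have := mul_nonneg hm0 (Real.exp_pos t).le
      linarith
    · subst h; simpa using Real.exp_pos t
  set h₁ : ℝ → ℝ := fun c => m + c / 4 - m * Real.exp c / (1 - m + m * Real.exp c) with hh₁
  set h : ℝ → ℝ := fun c => c * m + c ^ 2 / 8 - Real.log (1 - m + m * Real.exp c) with hh
  have hder : ∀ t : ℝ, HasDerivAt h (h₁ t) t := by
    intro t
    have h1 : HasDerivAt (fun c : ℝ => 1 - m + m * Real.exp c) (m * Real.exp t) t := by
      simpa using (((Real.hasDerivAt_exp t).const_mul m).const_add (1 - m))
    have h2 : HasDerivAt (fun c : ℝ => Real.log (1 - m + m * Real.exp c))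
        (m * Real.exp t / (1 - m + m * Real.exp t)) t := h1.log (hu t).ne'
    have h3 : HasDerivAt (fun c : ℝ => c * m + c ^ 2 / 8) (m + t / 4) t := by
      have := ((hasDerivAt_id t).mul_const m).add (((hasDerivAt_pow 2 t)).div_const 8)
      simpa [mul_comm, Pi.add_def] using this.congr_deriv (by push_cast; ring)
    simpa [hh₁, hh, sub_eq_add_neg, Pi.add_def, Pi.neg_def] using h3.sub h2
  have hder1 : ∀ t : ℝ, HasDerivAt h₁
      (1 / 4 - (m * Real.exp t * (1 - m + m * Real.exp t) - m * Real.exp t * (m * Real.exp t)) /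
        (1 - m + m * Real.exp t) ^ 2) t := by
    intro t
    have h1 : HasDerivAt (fun c : ℝ => 1 - m + m * Real.exp c) (m * Real.exp t) t := by
      simpa using (((Real.hasDerivAt_exp t).const_mul m).const_add (1 - m))
    have h0 : HasDerivAt (fun c : ℝ => m * Real.exp c) (m * Real.exp t) t :=
      (Real.hasDerivAt_exp t).const_mul m
    have h2 := h0.div h1 (hu t).ne'
    have h3 : HasDerivAt (fun c : ℝ => m + c / 4) (1 / 4) t := by
      simpa using ((hasDerivAt_id t).div_const 4).const_add m
    simpa [hh₁, sub_eq_add_neg, Pi.add_def, Pi.neg_def, Pi.div_def] using h3.sub h2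
  have hderiv1_nonneg : ∀ t : ℝ,
      0 ≤ 1 / 4 - (m * Real.exp t * (1 - m + m * Real.exp t) - m * Real.exp t * (m * Real.exp t)) /
        (1 - m + m * Real.exp t) ^ 2 := by
    intro t
    rw [sub_nonneg, div_le_iff₀ (pow_pos (hu t) 2)]
    nlinarith [sq_nonneg (1 - m - m * Real.exp t), Real.exp_pos t, mul_nonneg hm0 (Real.exp_pos t).le]
  have hmono1 : Monotone h₁ := by
    refine monotone_of_deriv_nonneg (fun t => (hder1 t).differentiableAt) ?_
    intro t
    rw [(hder1 t).deriv]
    exact hderiv1_nonneg t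
  have h10 : h₁ 0 = 0 := by
    simp [hh₁]
  have hpos : ∀ t : ℝ, 0 ≤ h t := by
    have h0 : h 0 = 0 := by simp [hh]
    intro t
    rcases le_total 0 t with ht | ht
    · have : MonotoneOn h (Set.Ici 0) := by
        refine monotoneOn_of_deriv_nonneg (convex_Ici 0)
          (fun s _ => ((hder s).differentiableAt.continuousAt.continuousWithinAt)) 
          (fun s hs => (hder s).differentiableAt.differentiableWithinAt) ?_
        intro s hs
        rw [(hder s).deriv]
        rw [interior_Ici] at hs
        have := hmono1 (le_of_lt hs)
        rwa [h10] at this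
      have := this (Set.self_mem_Ici) (Set.mem_Ici.2 ht) ht
      rwa [h0] at this
    · have : AntitoneOn h (Set.Iic 0) := by
        refine antitoneOn_of_deriv_nonpos (convex_Iic 0)
          (fun s _ => ((hder s).differentiableAt.continuousAt.continuousWithinAt))
          (fun s hs => (hder s).differentiableAt.differentiableWithinAt) ?_
        intro s hs
        rw [(hder s).deriv]
        rw [interior_Iic] at hs
        have := hmono1 (le_of_lt hs)
        rwa [h10] at this
      have := this (Set.mem_Iic.2 ht) (Set.self_mem_Iic) ht
      rwa [h0] at this
  have hlog : Real.log (1 - m + m * Real.exp c) ≤ c * m + c ^ 2 / 8 := by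
    have := hpos c
    simp only [hh] at this
    linarith
  calc 1 - m + m * Real.exp c = Real.exp (Real.log (1 - m + m * Real.exp c)) :=
        (Real.exp_log (hu c)).symm
    _ ≤ Real.exp (c * m + c ^ 2 / 8) := Real.exp_le_exp.2 hlog

private lemma sum_exp_le {ι : Type*} (s : Finset ι) (hs : s.Nonempty) (y : ι → ℝ)
    (hy : ∀ i ∈ s, y i ∈ Set.Icc (0:ℝ) 1) (c : ℝ) :
    ∑ i ∈ s, Real.exp (c * y i) ≤
      (s.card : ℝ) * Real.exp (c * ((∑ i ∈ s, y i) / (s.card : ℝ)) + c ^ 2 / 8) := by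
  have hcard : (0:ℝ) < (s.card : ℝ) := by exact_mod_cast Finset.card_pos.2 hs
  set m : ℝ := (∑ i ∈ s, y i) / (s.card : ℝ) with hm
  have hsum0 : 0 ≤ ∑ i ∈ s, y i := Finset.sum_nonneg fun i hi => (hy i hi).1
  have hsum1 : ∑ i ∈ s, y i ≤ (s.card : ℝ) := by
    calc ∑ i ∈ s, y i ≤ ∑ i ∈ s, (1:ℝ) := Finset.sum_le_sum fun i hi => (hy i hi).2
      _ = (s.card : ℝ) := by simp
  have hm0 : 0 ≤ m := div_nonneg hsum0 hcard.le
  have hm1 : m ≤ 1 := by rw [hm, div_le_one hcard]; exact hsum1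
  calc ∑ i ∈ s, Real.exp (c * y i) ≤ ∑ i ∈ s, (1 - y i + y i * Real.exp c) :=
        Finset.sum_le_sum fun i hi => exp_mul_le_of_mem_Icc (hy i hi).1 (hy i hi).2 c
    _ = (s.card : ℝ) * (1 - m + m * Real.exp c) := by
        rw [Finset.sum_add_distrib, Finset.sum_sub_distrib, ← Finset.sum_mul]
        have : (∑ i ∈ s, y i) = (s.card : ℝ) * m := by
          rw [hm]; field_simp
        simp [this]; ring
    _ ≤ (s.card : ℝ) * Real.exp (c * m + c ^ 2 / 8) := by
        have := hoeffding_scalar hm0 hm1 c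
        nlinarith

private def snocEmb {n k : ℕ} (g : Fin k ↪ Fin n) (j : {j : Fin n // ∀ i, g i ≠ j}) :
    Fin (k + 1) ↪ Fin n :=
  ⟨Fin.snoc g j.1, by
    intro a b hab
    induction a using Fin.lastCases with
    | last =>
      induction b using Fin.lastCases with
      | last => rfl
      | cast i =>
        rw [Fin.snoc_last, Fin.snoc_castSucc] at hab
        exact absurd hab.symm (j.2 i)
    | cast i =>
      induction b using Fin.lastCases with
      | last =>
        rw [Fin.snoc_castSucc, Fin.snoc_last] at hab
        exact absurd hab (j.2 i)
      | cast i' =>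
        rw [Fin.snoc_castSucc, Fin.snoc_castSucc] at hab
        exact congrArg Fin.castSucc (g.injective hab)⟩

private lemma snocEmb_bijective (n k : ℕ) :
    Function.Bijective
      (fun p : Σ g : Fin k ↪ Fin n, {j : Fin n // ∀ i, g i ≠ j} => snocEmb p.1 p.2) := by
  constructor
  · rintro ⟨g, j, hj⟩ ⟨g', j', hj'⟩ h
    have hfun : (Fin.snoc (g : Fin k → Fin n) j : Fin (k+1) → Fin n)
        = Fin.snoc (g' : Fin k → Fin n) j' := by
      have := congrArg (fun e : Fin (k+1) ↪ Fin n => (e : Fin (k+1) → Fin n)) h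
      exact this
    have hg : ∀ i, g i = g' i := fun i => by
      simpa [Fin.snoc_castSucc] using congrFun hfun i.castSucc
    have hjj : j = j' := by
      simpa [Fin.snoc_last] using congrFun hfun (Fin.last k)
    have hg' : g = g' := Function.Embedding.ext hg
    subst hg'
    subst hjj
    rfl
  · intro f
    refine ⟨⟨⟨fun i => f i.castSucc, fun a b hab => ?_⟩, ⟨f (Fin.last k), fun i hi => ?_⟩⟩, ?_⟩
    · exact Fin.castSucc_injective _ (f.injective hab)
    · exact absurd (f.injective hi) (Fin.castSucc_lt_last i).ne
    · ext i
      induction i using Fin.lastCases with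
      | last => simp [snocEmb]; simp only [DFunLike.coe]; simp
      | cast i => simp [snocEmb]; simp only [DFunLike.coe]; simp

private lemma sum_split {n k : ℕ} (G : (Fin (k + 1) ↪ Fin n) → ℝ) :
    ∑ f : Fin (k + 1) ↪ Fin n, G f =
      ∑ g : Fin k ↪ Fin n, ∑ j : {j : Fin n // ∀ i, g i ≠ j}, G (snocEmb g j) := by
  rw [← Fintype.sum_bijective _ (snocEmb_bijective n k) _ G (fun p => rfl)]
  rw [← Finset.univ_sigma_univ, Finset.sum_sigma]

private lemma sum_snoc {n k : ℕ} (x : Fin n → ℝ) (g : Fin k ↪ Fin n)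
    (j : {j : Fin n // ∀ i, g i ≠ j}) :
    ∑ i : Fin (k + 1), x (snocEmb g j i) = (∑ i : Fin k, x (g i)) + x j.1 := by
  rw [Fin.sum_univ_castSucc]
  simp [snocEmb]; simp only [DFunLike.coe]; simp

private lemma sum_subtype_filter {n k : ℕ} (g : Fin k ↪ Fin n) (H : Fin n → ℝ) :
    ∑ j : {j : Fin n // ∀ i, g i ≠ j}, H j.1 =
      ∑ j ∈ Finset.univ.filter (fun j => ∀ i, g i ≠ j), H j := by
  exact (Finset.sum_subtype (Finset.univ.filter (fun j => ∀ i, g i ≠ j)) (fun j => by simp) H).symm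

private lemma filter_compl_eq {n k : ℕ} (g : Fin k ↪ Fin n) :
    Finset.univ.filter (fun j => ∀ i, g i ≠ j) = Finset.univ \ Finset.univ.image g := by
  ext j
  simp [eq_comm]

private lemma card_filter_compl {n k : ℕ} (g : Fin k ↪ Fin n) :
    (Finset.univ.filter (fun j => ∀ i, g i ≠ j)).card = n - k := by
  rw [filter_compl_eq, Finset.card_sdiff_of_subset (Finset.subset_univ _),
    Finset.card_image_of_injective _ g.injective]
  simp

private lemma sum_filter_compl {n k : ℕ} (g : Fin k ↪ Fin n) (x : Fin n → ℝ) :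
    ∑ j ∈ Finset.univ.filter (fun j => ∀ i, g i ≠ j), x j =
      (∑ j, x j) - ∑ i, x (g i) := by
  rw [filter_compl_eq, Finset.sum_sdiff_eq_sub (Finset.subset_univ _),
    Finset.sum_image (fun a _ b _ h => g.injective h)]

private lemma card_emb_succ {n k : ℕ} (hk : k < n) :
    (Fintype.card (Fin (k+1) ↪ Fin n) : ℝ) =
      ((n : ℝ) - k) * (Fintype.card (Fin k ↪ Fin n) : ℝ) := by
  rw [Fintype.card_embedding_eq, Fintype.card_embedding_eq]
  simp only [Fintype.card_fin]
  rw [Nat.descFactorial_succ]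
  push_cast [Nat.cast_sub hk.le]
  ring

private lemma step_bound {n : ℕ} (x : Fin n → ℝ) (hx : ∀ i, x i ∈ Set.Icc (0:ℝ) 1)
    {k : ℕ} (hk : k < n) (c : ℝ) :
    ∑ f : Fin (k+1) ↪ Fin n,
        Real.exp (c * ((∑ i, x (f i)) - ((k:ℝ)+1) * ((1/(n:ℝ)) * ∑ i, x i))) ≤
      ((n:ℝ) - k) * Real.exp (c^2/8) *
        ∑ g : Fin k ↪ Fin n,
          Real.exp ((c * ((n:ℝ)-(k:ℝ)-1) / ((n:ℝ)-k)) *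
            ((∑ i, x (g i)) - (k:ℝ) * ((1/(n:ℝ)) * ∑ i, x i))) := by
  have hn : 0 < n := lt_of_le_of_lt (Nat.zero_le k) hk
  have hβ : (0:ℝ) < (n:ℝ) - k := by
    have : (k:ℝ) < (n:ℝ) := by exact_mod_cast hk
    linarith
  set μ : ℝ := (1/(n:ℝ)) * ∑ i, x i with hμ
  have hnμ : (∑ i, x i) = (n:ℝ) * μ := by
    rw [hμ]
    field_simp
  rw [sum_split (fun f => Real.exp (c * ((∑ i, x (f i)) - ((k:ℝ)+1) * μ)))]
  rw [Finset.mul_sum]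
  refine Finset.sum_le_sum fun g _ => ?_
  set S : ℝ := ∑ i, x (g i) with hS
  -- rewrite the inner sum over the subtype as a filter sum
  have h1 : ∑ j : {j : Fin n // ∀ i, g i ≠ j},
      Real.exp (c * ((∑ i, x (snocEmb g j i)) - ((k:ℝ)+1) * μ)) =
      ∑ j ∈ Finset.univ.filter (fun j => ∀ i, g i ≠ j),
        Real.exp (c * ((S + x j) - ((k:ℝ)+1) * μ)) := by
    rw [← sum_subtype_filter g (fun j => Real.exp (c * ((S + x j) - ((k:ℝ)+1) * μ)))]
    refine Finset.sum_congr rfl fun j _ => ?_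
    rw [sum_snoc]
  rw [h1]
  have h2 : ∀ j, Real.exp (c * ((S + x j) - ((k:ℝ)+1) * μ)) =
      Real.exp (c * (S - ((k:ℝ)+1) * μ)) * Real.exp (c * x j) := by
    intro j
    rw [← Real.exp_add]
    ring_nf
  simp only [h2]
  rw [← Finset.mul_sum]
  set s := Finset.univ.filter (fun j : Fin n => ∀ i, g i ≠ j) with hs
  have hcard : (s.card : ℝ) = (n:ℝ) - k := by
    rw [hs, card_filter_compl g]
    exact_mod_cast Nat.cast_sub hk.le
  have hsne : s.Nonempty := by
    rw [← Finset.card_pos]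
    have : (0:ℝ) < (s.card : ℝ) := by rw [hcard]; exact hβ
    exact_mod_cast this
  have hsum : (∑ j ∈ s, x j) = (n:ℝ) * μ - S := by
    rw [hs, sum_filter_compl g x, hnμ, hS]
  have h3 := sum_exp_le s hsne x (fun i _ => hx i) c
  calc Real.exp (c * (S - ((k:ℝ)+1) * μ)) * ∑ j ∈ s, Real.exp (c * x j)
      ≤ Real.exp (c * (S - ((k:ℝ)+1) * μ)) *
        ((s.card : ℝ) * Real.exp (c * ((∑ j ∈ s, x j) / (s.card : ℝ)) + c ^ 2 / 8)) :=
        mul_le_mul_of_nonneg_left h3 (Real.exp_pos _).le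
    _ = (((n:ℝ) - k) * Real.exp (c^2/8)) *
        Real.exp ((c * ((n:ℝ)-(k:ℝ)-1) / ((n:ℝ)-k)) * (S - (k:ℝ) * μ)) := by
        rw [hcard, hsum]
        have key : Real.exp (c * (S - ((k:ℝ)+1) * μ)) *
            Real.exp (c * (((n:ℝ)*μ - S) / ((n:ℝ)-k)) + c^2/8) =
            Real.exp (c^2/8) *
              Real.exp ((c * ((n:ℝ)-(k:ℝ)-1) / ((n:ℝ)-k)) * (S - (k:ℝ) * μ)) := by
          rw [← Real.exp_add, ← Real.exp_add]
          congr 1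
          field_simp
          ring
        rw [mul_left_comm, key]
        ring

private lemma mgf_bound {n r : ℕ} (x : Fin n → ℝ) (hx : ∀ i, x i ∈ Set.Icc (0:ℝ) 1)
    (l : ℝ) (hrn : r < n) :
    ∀ k, k ≤ r →
    ∑ f : Fin k ↪ Fin n,
        Real.exp ((l * ((n:ℝ)-r) / ((n:ℝ)-k)) *
          ((∑ i, x (f i)) - (k:ℝ) * ((1/(n:ℝ)) * ∑ i, x i))) ≤
      (Fintype.card (Fin k ↪ Fin n) : ℝ) *
        Real.exp (l^2 * ((n:ℝ)-r)^2 / 8 * ∑ j ∈ Finset.range k, (1/((n:ℝ)-j-1))^2) := by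
  intro k
  induction k with
  | zero => simp
  | succ k ih =>
    intro hk
    have hkr : k ≤ r := Nat.le_of_succ_le hk
    have hkn : k < n := lt_of_lt_of_le (Nat.lt_of_lt_of_le (Nat.lt_succ_self k) hk) hrn.le
    have hk1n : k + 1 < n := lt_of_le_of_lt hk hrn
    have hβ : (0:ℝ) < (n:ℝ) - k := by
      have : (k:ℝ) < (n:ℝ) := by exact_mod_cast hkn
      linarith
    have hβ1 : (0:ℝ) < (n:ℝ) - k - 1 := by
      have : ((k:ℝ) + 1) < (n:ℝ) := by exact_mod_cast hk1n
      linarith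
    set c : ℝ := l * ((n:ℝ)-r) / ((n:ℝ)-k-1) with hc
    have hcast : ((n:ℝ) - ((k:ℕ)+1 : ℕ)) = (n:ℝ) - k - 1 := by push_cast; ring
    have h0 : ∑ f : Fin (k+1) ↪ Fin n,
        Real.exp ((l * ((n:ℝ)-r) / ((n:ℝ)-((k:ℕ)+1:ℕ))) *
          ((∑ i, x (f i)) - (((k:ℕ)+1:ℕ):ℝ) * ((1/(n:ℝ)) * ∑ i, x i))) =
        ∑ f : Fin (k+1) ↪ Fin n,
        Real.exp (c * ((∑ i, x (f i)) - ((k:ℝ)+1) * ((1/(n:ℝ)) * ∑ i, x i))) := by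
      refine Finset.sum_congr rfl fun f _ => ?_
      rw [hcast]
      push_cast
      rw [hc]
    rw [h0]
    have h1 := step_bound x hx hkn c
    have hcoef : c * ((n:ℝ)-(k:ℝ)-1) / ((n:ℝ)-k) = l * ((n:ℝ)-r) / ((n:ℝ)-k) := by
      rw [hc]
      field_simp
    rw [hcoef] at h1
    refine h1.trans ?_
    have h2 := ih hkr
    calc ((n:ℝ) - k) * Real.exp (c^2/8) *
          ∑ g : Fin k ↪ Fin n,
            Real.exp ((l * ((n:ℝ)-r) / ((n:ℝ)-k)) *
              ((∑ i, x (g i)) - (k:ℝ) * ((1/(n:ℝ)) * ∑ i, x i)))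
        ≤ ((n:ℝ) - k) * Real.exp (c^2/8) *
          ((Fintype.card (Fin k ↪ Fin n) : ℝ) *
            Real.exp (l^2 * ((n:ℝ)-r)^2 / 8 * ∑ j ∈ Finset.range k, (1/((n:ℝ)-j-1))^2)) := by
          refine mul_le_mul_of_nonneg_left h2 ?_
          positivity
      _ = (Fintype.card (Fin (k+1) ↪ Fin n) : ℝ) *
          Real.exp (l^2 * ((n:ℝ)-r)^2 / 8 * ∑ j ∈ Finset.range (k+1), (1/((n:ℝ)-j-1))^2) := by
          rw [card_emb_succ hkn, Finset.sum_range_succ]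
          have hexp : Real.exp (c^2/8) *
              Real.exp (l^2 * ((n:ℝ)-r)^2 / 8 * ∑ j ∈ Finset.range k, (1/((n:ℝ)-j-1))^2) =
              Real.exp (l^2 * ((n:ℝ)-r)^2 / 8 *
                ((∑ j ∈ Finset.range k, (1/((n:ℝ)-j-1))^2) + (1/((n:ℝ)-k-1))^2)) := by
            rw [← Real.exp_add]
            congr 1
            rw [hc]
            field_simp
            ring
          rw [← hexp]
          ring

private lemma telescope {n : ℕ} : ∀ k, k < n →
    ∑ j ∈ Finset.range k, (1/((n:ℝ)-j-1))^2 ≤ 2 * (1/((n:ℝ)-k) - 1/(n:ℝ)) := by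
  intro k
  induction k with
  | zero => simp
  | succ k ih =>
    intro hk
    have hkn : k < n := Nat.lt_of_succ_lt hk
    have hβ : (0:ℝ) < (n:ℝ) - k := by
      have : (k:ℝ) < (n:ℝ) := by exact_mod_cast hkn
      linarith
    have hβ1 : (1:ℝ) ≤ (n:ℝ) - k - 1 := by
      have : ((k:ℝ) + 1 + 1) ≤ (n:ℝ) := by exact_mod_cast hk
      linarith
    have hβ1' : (0:ℝ) < (n:ℝ) - k - 1 := by linarith
    rw [Finset.sum_range_succ]
    have key : (1/((n:ℝ)-k-1))^2 ≤ 2 * (1/((n:ℝ)-k-1) - 1/((n:ℝ)-k)) := by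
      have h2 : 2 * (1/((n:ℝ)-k-1) - 1/((n:ℝ)-k)) = 2 / (((n:ℝ)-k-1) * ((n:ℝ)-k)) := by
        field_simp
        ring
      rw [h2, div_pow, one_pow, div_le_div_iff₀ (by positivity) (by positivity)]
      nlinarith
    have hcast : ((n:ℝ) - ((k:ℕ)+1:ℕ)) = (n:ℝ) - k - 1 := by push_cast; ring
    have := ih hkn
    rw [hcast]
    push_cast
    linarith

private lemma count_tail {α : Type*} [Fintype α] (D : α → ℝ) (l t : ℝ) (hl : 0 ≤ l) (B : ℝ)
    (hmgf : ∑ f : α, Real.exp (l * D f) ≤ B) :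
    ((Finset.univ.filter (fun f => t ≤ D f)).card : ℝ) * Real.exp (l * t) ≤ B := by
  classical
  calc ((Finset.univ.filter (fun f => t ≤ D f)).card : ℝ) * Real.exp (l * t)
      = ∑ _f ∈ Finset.univ.filter (fun f => t ≤ D f), Real.exp (l * t) := by
        rw [Finset.sum_const, nsmul_eq_mul]
    _ ≤ ∑ f ∈ Finset.univ.filter (fun f => t ≤ D f), Real.exp (l * D f) :=
        Finset.sum_le_sum fun f hf => Real.exp_le_exp.2
          (mul_le_mul_of_nonneg_left (Finset.mem_filter.1 hf).2 hl)
    _ ≤ ∑ f : α, Real.exp (l * D f) :=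
        Finset.sum_le_sum_of_subset_of_nonneg (Finset.filter_subset _ _)
          (fun _ _ _ => (Real.exp_pos _).le)
    _ ≤ B := hmgf

private lemma bad_count {n r : ℕ} (x : Fin n → ℝ) (hx : ∀ i, x i ∈ Set.Icc (0:ℝ) 1)
    (hr : 1 ≤ r) (hrn : r < n) {δ : ℝ} (hδ0 : 0 < δ) (hδ1 : δ < 1) :
    ((Finset.univ.filter (fun f : Fin r ↪ Fin n =>
        ¬ |(1 / (r : ℝ)) * ∑ i, x (f i) - (1 / (n : ℝ)) * ∑ i, x i| ≤
          Real.sqrt ((1 / (r : ℝ) - 1 / (n : ℝ)) * Real.log (2 / δ)))).card : ℝ) ≤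
      δ * (Fintype.card (Fin r ↪ Fin n) : ℝ) := by
  classical
  have hrpos : (0:ℝ) < (r:ℝ) := by exact_mod_cast hr
  have hnpos : (0:ℝ) < (n:ℝ) := lt_trans hrpos (by exact_mod_cast hrn)
  have hβ : (0:ℝ) < (n:ℝ) - (r:ℝ) := by
    have : (r:ℝ) < (n:ℝ) := by exact_mod_cast hrn
    linarith
  set N : ℝ := (Fintype.card (Fin r ↪ Fin n) : ℝ) with hN
  have hNpos : 0 < N := by
    rw [hN]
    have : 0 < Fintype.card (Fin r ↪ Fin n) :=
      Fintype.card_pos_iff.2 ⟨Fin.castLEEmb hrn.le⟩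
    exact_mod_cast this
  set μ : ℝ := (1/(n:ℝ)) * ∑ i, x i with hμ
  set D : (Fin r ↪ Fin n) → ℝ := fun f => (∑ i, x (f i)) - (r:ℝ) * μ with hD
  set L : ℝ := Real.log (2/δ) with hL
  have hLpos : 0 < L := by
    rw [hL]
    apply Real.log_pos
    rw [lt_div_iff₀ hδ0]
    linarith
  have hdiff : 1/(r:ℝ) - 1/(n:ℝ) = ((n:ℝ)-(r:ℝ)) / ((r:ℝ)*(n:ℝ)) := by
    field_simp
  have hdiffpos : 0 < 1/(r:ℝ) - 1/(n:ℝ) := by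
    rw [hdiff]
    positivity
  set ε : ℝ := Real.sqrt ((1/(r:ℝ) - 1/(n:ℝ)) * L) with hε
  have hεnn : 0 ≤ ε := Real.sqrt_nonneg _
  have hεsq : ε^2 = (1/(r:ℝ) - 1/(n:ℝ)) * L := by
    rw [hε, Real.sq_sqrt (by positivity)]
  set t : ℝ := (r:ℝ) * ε with ht
  set l : ℝ := 2*(n:ℝ)*ε/((n:ℝ)-(r:ℝ)) with hl
  have hlnn : 0 ≤ l := by positivity
  set w : ℝ := (r:ℝ)*((n:ℝ)-(r:ℝ))/(4*(n:ℝ)) with hw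
  -- mgf bound specialised
  have key : ∀ m : ℝ, ∑ f : Fin r ↪ Fin n, Real.exp (m * D f) ≤ N * Real.exp (m^2 * w) := by
    intro m
    have h1 := mgf_bound x hx m hrn r le_rfl
    have hco : m * ((n:ℝ)-(r:ℝ)) / ((n:ℝ)-(r:ℝ)) = m := by
      rw [mul_div_assoc, div_self hβ.ne', mul_one]
    rw [hco] at h1
    refine le_trans h1 ?_
    refine mul_le_mul_of_nonneg_left ?_ hNpos.le
    rw [Real.exp_le_exp]
    have h2 := telescope r hrn
    have h3 : m^2 * ((n:ℝ)-(r:ℝ))^2 / 8 * (2 * (1/((n:ℝ)-(r:ℝ)) - 1/(n:ℝ))) = m^2 * w := by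
      rw [hw]
      field_simp
      ring
    calc m^2 * ((n:ℝ)-(r:ℝ))^2 / 8 * ∑ j ∈ Finset.range r, (1/((n:ℝ)-(j:ℝ)-1))^2
        ≤ m^2 * ((n:ℝ)-(r:ℝ))^2 / 8 * (2 * (1/((n:ℝ)-(r:ℝ)) - 1/(n:ℝ))) := by
          refine mul_le_mul_of_nonneg_left h2 (by positivity)
      _ = m^2 * w := h3
  -- the exponent computation
  have hexp : Real.exp (l^2 * w - l * t) = δ/2 := by
    have harg : l^2 * w - l * t = -L := by
      have h1 : l^2 * w - l * t = -(((r:ℝ)*(n:ℝ)/((n:ℝ)-(r:ℝ))) * ε^2) := by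
        rw [hl, hw, ht]
        field_simp
        ring
      rw [h1, hεsq, hdiff]
      field_simp
    rw [harg, Real.exp_neg, hL, Real.exp_log (by positivity), inv_div]
  -- upper tail
  have hA : ((Finset.univ.filter (fun f : Fin r ↪ Fin n => t ≤ D f)).card : ℝ) ≤ N * (δ/2) := by
    have := count_tail D l t hlnn _ (key l)
    rw [← hexp, Real.exp_sub, ← mul_div_assoc, le_div_iff₀ (Real.exp_pos _)]
    exact this
  have hB : ((Finset.univ.filter (fun f : Fin r ↪ Fin n => t ≤ -D f)).card : ℝ) ≤ N * (δ/2) := by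
    have hmgf : ∑ f : Fin r ↪ Fin n, Real.exp (l * (-D f)) ≤ N * Real.exp (l^2*w) := by
      have := key (-l)
      simpa [neg_mul, mul_neg, neg_neg] using this
    have := count_tail (fun f => -D f) l t hlnn _ hmgf
    rw [← hexp, Real.exp_sub, ← mul_div_assoc, le_div_iff₀ (Real.exp_pos _)]
    exact this
  -- subset of union
  have hsub : Finset.univ.filter (fun f : Fin r ↪ Fin n =>
        ¬ |(1 / (r : ℝ)) * ∑ i, x (f i) - (1 / (n : ℝ)) * ∑ i, x i| ≤ ε) ⊆
      (Finset.univ.filter (fun f : Fin r ↪ Fin n => t ≤ D f)) ∪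
      (Finset.univ.filter (fun f : Fin r ↪ Fin n => t ≤ -D f)) := by
    intro f hf
    rw [Finset.mem_filter] at hf
    have hf2 := hf.2
    push_neg at hf2
    have hdev : (1 / (r : ℝ)) * ∑ i, x (f i) - (1 / (n : ℝ)) * ∑ i, x i = D f / (r:ℝ) := by
      rw [hD, hμ]
      field_simp
    rw [hdev, abs_div, abs_of_pos hrpos, lt_div_iff₀ hrpos] at hf2
    have habs : t < |D f| := by
      rw [ht]
      calc (r:ℝ) * ε = ε * (r:ℝ) := mul_comm _ _
        _ < |D f| := hf2
    rw [Finset.mem_union, Finset.mem_filter, Finset.mem_filter]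
    rcases abs_cases (D f) with ⟨h, _⟩ | ⟨h, _⟩
    · left
      rw [h] at habs
      exact ⟨Finset.mem_univ _, habs.le⟩
    · right
      rw [h] at habs
      exact ⟨Finset.mem_univ _, habs.le⟩
  calc ((Finset.univ.filter (fun f : Fin r ↪ Fin n =>
        ¬ |(1 / (r : ℝ)) * ∑ i, x (f i) - (1 / (n : ℝ)) * ∑ i, x i| ≤ ε)).card : ℝ)
      ≤ (((Finset.univ.filter (fun f : Fin r ↪ Fin n => t ≤ D f)) ∪
          (Finset.univ.filter (fun f : Fin r ↪ Fin n => t ≤ -D f))).card : ℝ) := by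
        exact_mod_cast Finset.card_le_card hsub
    _ ≤ ((Finset.univ.filter (fun f : Fin r ↪ Fin n => t ≤ D f)).card : ℝ) +
        ((Finset.univ.filter (fun f : Fin r ↪ Fin n => t ≤ -D f)).card : ℝ) := by
        exact_mod_cast Finset.card_union_le _ _
    _ ≤ N * (δ/2) + N * (δ/2) := add_le_add hA hB
    _ = δ * N := by ring

/-- **Hoeffding–Serfling-type concentration for sampling without replacement**
(Theorem 1 of the paper).

There is an absolute constant `C > 0` such that for every finite population
`x : Fin n → ℝ` with values in `[0,1]` and every sample size `1 ≤ r ≤ n`,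
if a sample of size `r` is drawn uniformly at random without replacement
(i.e. a uniformly random injection `f : Fin r ↪ Fin n`), then for every
`δ ∈ (0,1)`, with probability at least `1 - δ`,
`|(1/r) ∑ y_i - (1/n) ∑ x_i| ≤ C * sqrt ((1/r - 1/n) * log (2/δ))`. -/
theorem sample_mean_concentration :
    ∃ C : ℝ, 0 < C ∧
      ∀ (n r : ℕ) [Nonempty (Fin r ↪ Fin n)], 1 ≤ r → r ≤ n →
        ∀ (x : Fin n → ℝ), (∀ i, x i ∈ Set.Icc (0 : ℝ) 1) →
          ∀ δ : ℝ, δ ∈ Set.Ioo (0 : ℝ) 1 →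
            letI : MeasurableSpace (Fin r ↪ Fin n) := ⊤
            ENNReal.ofReal (1 - δ) ≤
              (PMF.uniformOfFintype (Fin r ↪ Fin n)).toMeasure
                {f : Fin r ↪ Fin n |
                  |(1 / (r : ℝ)) * ∑ i, x (f i) - (1 / (n : ℝ)) * ∑ i, x i| ≤
                    C * Real.sqrt ((1 / (r : ℝ) - 1 / (n : ℝ)) * Real.log (2 / δ))} := by
  classical
  refine ⟨1, one_pos, ?_⟩
  intro n r _ hr hrn x hx δ hδ
  obtain ⟨hδ0, hδ1⟩ := hδ
  letI : MeasurableSpace (Fin r ↪ Fin n) := ⊤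
  simp only [one_mul]
  rcases eq_or_lt_of_le hrn with heq | hlt
  · -- r = n : the sample mean equals the population mean
    subst heq
    have hset : {f : Fin r ↪ Fin r |
        |(1 / (r : ℝ)) * ∑ i, x (f i) - (1 / (r : ℝ)) * ∑ i, x i| ≤
          Real.sqrt ((1 / (r : ℝ) - 1 / (r : ℝ)) * Real.log (2 / δ))} = Set.univ := by
      ext f
      simp only [Set.mem_setOf_eq, Set.mem_univ, iff_true]
      have hbij : Function.Bijective f := Finite.injective_iff_bijective.1 f.injective
      have hsum : ∑ i, x (f i) = ∑ i, x i :=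
        Fintype.sum_bijective f hbij _ _ (fun i => rfl)
      rw [hsum]
      simp
    rw [hset, MeasureTheory.measure_univ]
    exact ENNReal.ofReal_le_one.2 (by linarith)
  · -- r < n : use the concentration bound
    have hbad := bad_count x hx hr hlt hδ0 hδ1
    have hmeas : MeasurableSet {f : Fin r ↪ Fin n |
        |(1 / (r : ℝ)) * ∑ i, x (f i) - (1 / (n : ℝ)) * ∑ i, x i| ≤
          Real.sqrt ((1 / (r : ℝ) - 1 / (n : ℝ)) * Real.log (2 / δ))} :=
      MeasurableSpace.measurableSet_top
    rw [PMF.toMeasure_uniformOfFintype_apply _ hmeas]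
    have hcardS : Fintype.card ↥{f : Fin r ↪ Fin n |
        |(1 / (r : ℝ)) * ∑ i, x (f i) - (1 / (n : ℝ)) * ∑ i, x i| ≤
          Real.sqrt ((1 / (r : ℝ) - 1 / (n : ℝ)) * Real.log (2 / δ))} =
        (Finset.univ.filter (fun f : Fin r ↪ Fin n =>
          |(1 / (r : ℝ)) * ∑ i, x (f i) - (1 / (n : ℝ)) * ∑ i, x i| ≤
            Real.sqrt ((1 / (r : ℝ) - 1 / (n : ℝ)) * Real.log (2 / δ)))).card := by
      simp [← Set.toFinset_card, Set.toFinset_setOf, Fintype.card_subtype]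
    have hsplit := Finset.card_filter_add_card_filter_not
      (s := (Finset.univ : Finset (Fin r ↪ Fin n)))
      (p := fun f : Fin r ↪ Fin n =>
        |(1 / (r : ℝ)) * ∑ i, x (f i) - (1 / (n : ℝ)) * ∑ i, x i| ≤
          Real.sqrt ((1 / (r : ℝ) - 1 / (n : ℝ)) * Real.log (2 / δ)))
    rw [Finset.card_univ] at hsplit
    have hNpos : 0 < Fintype.card (Fin r ↪ Fin n) := Fintype.card_pos
    have hreal : (1 - δ) * (Fintype.card (Fin r ↪ Fin n) : ℝ) ≤
        ((Finset.univ.filter (fun f : Fin r ↪ Fin n =>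
          |(1 / (r : ℝ)) * ∑ i, x (f i) - (1 / (n : ℝ)) * ∑ i, x i| ≤
            Real.sqrt ((1 / (r : ℝ) - 1 / (n : ℝ)) * Real.log (2 / δ)))).card : ℝ) := by
      have h1 : ((Finset.univ.filter (fun f : Fin r ↪ Fin n =>
          |(1 / (r : ℝ)) * ∑ i, x (f i) - (1 / (n : ℝ)) * ∑ i, x i| ≤
            Real.sqrt ((1 / (r : ℝ) - 1 / (n : ℝ)) * Real.log (2 / δ)))).card : ℝ) +
          ((Finset.univ.filter (fun f : Fin r ↪ Fin n =>
          ¬ |(1 / (r : ℝ)) * ∑ i, x (f i) - (1 / (n : ℝ)) * ∑ i, x i| ≤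
            Real.sqrt ((1 / (r : ℝ) - 1 / (n : ℝ)) * Real.log (2 / δ)))).card : ℝ)
          = (Fintype.card (Fin r ↪ Fin n) : ℝ) := by exact_mod_cast hsplit
      nlinarith [hbad]
    have hNne : ((Fintype.card (Fin r ↪ Fin n) : ℝ≥0∞)) ≠ 0 := by
      exact_mod_cast Nat.cast_ne_zero.2 hNpos.ne'
    have hNnetop : ((Fintype.card (Fin r ↪ Fin n) : ℝ≥0∞)) ≠ ⊤ := ENNReal.natCast_ne_top _
    rw [ENNReal.le_div_iff_mul_le (Or.inl hNne) (Or.inl hNnetop)]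
    rw [hcardS]
    calc ENNReal.ofReal (1 - δ) * (Fintype.card (Fin r ↪ Fin n) : ℝ≥0∞)
        = ENNReal.ofReal ((1 - δ) * (Fintype.card (Fin r ↪ Fin n) : ℝ)) := by
          rw [ENNReal.ofReal_mul (by linarith)]
          congr 1
          exact (ENNReal.ofReal_natCast _).symm
      _ ≤ ENNReal.ofReal (((Finset.univ.filter (fun f : Fin r ↪ Fin n =>
          |(1 / (r : ℝ)) * ∑ i, x (f i) - (1 / (n : ℝ)) * ∑ i, x i| ≤
            Real.sqrt ((1 / (r : ℝ) - 1 / (n : ℝ)) * Real.log (2 / δ)))).card : ℝ)) :=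
          ENNReal.ofReal_le_ofReal hreal
      _ = (((Finset.univ.filter (fun f : Fin r ↪ Fin n =>
          |(1 / (r : ℝ)) * ∑ i, x (f i) - (1 / (n : ℝ)) * ∑ i, x i| ≤
            Real.sqrt ((1 / (r : ℝ) - 1 / (n : ℝ)) * Real.log (2 / δ)))).card : ℝ≥0∞)) :=
          ENNReal.ofReal_natCast _
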